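/- Let J ∈ ℝ^{N×p} and y ∈ ℝ^N, and define h(θ, u, v) = (1/2)‖Jθ + u⊙u − v⊙v − y‖₂². If (θ, u, v) is a critical point of h that is not a global minimizer, i.e., its residual r := Jθ + u⊙u − v⊙v − y is nonzero, then there exists an index i ∈ {1, …, N} such that the i-th entries satisfy uⁱ = vⁱ = 0 and rⁱ ≠ 0. -/

import Mathlib

/-- If `(θ,u,v)` is a critical point of
`h(θ,u,v) = (1/2)‖Jθ + u⊙u − v⊙v − y‖₂²` whose residual
`r = Jθ + u⊙u − v⊙v − y` is nonzero, then there is an index `i` with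
`u i = v i = 0` and `r i ≠ 0`. -/
theorem stmt_1 (N p : ℕ) (J : Matrix (Fin N) (Fin p) ℝ) (y : Fin N → ℝ)
    (h : ((Fin p → ℝ) × (Fin N → ℝ) × (Fin N → ℝ)) → ℝ)
    (hdef : ∀ (θ : Fin p → ℝ) (u v : Fin N → ℝ), h (θ, u, v) =
      (1 / 2) * ∑ i, (J.mulVec θ i + u i * u i - v i * v i - y i) ^ 2)
    (θ : Fin p → ℝ) (u v : Fin N → ℝ) (r : Fin N → ℝ)
    (hr : r = fun i => J.mulVec θ i + u i * u i - v i * v i - y i)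
    (hcrit : fderiv ℝ h (θ, u, v) = 0)
    (hnotglobal : r ≠ 0) :
    ∃ i : Fin N, u i = 0 ∧ v i = 0 ∧ r i ≠ 0 := by
  classical
  obtain ⟨i, hri⟩ : ∃ i, r i ≠ 0 := by
    by_contra hc
    push_neg at hc
    exact hnotglobal (funext fun j => hc j)
  have hh : h = fun x => (1/2) * ∑ j, (J.mulVec x.1 j + x.2.1 j * x.2.1 j
      - x.2.2 j * x.2.2 j - y j)^2 := by
    funext x
    exact hdef x.1 x.2.1 x.2.2
  have hdiff : DifferentiableAt ℝ h (θ, u, v) := by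
    rw [hh]
    simp only [Matrix.mulVec, dotProduct]
    fun_prop
  have h0 : HasFDerivAt h (0 : ((Fin p → ℝ) × (Fin N → ℝ) × (Fin N → ℝ)) →L[ℝ] ℝ) (θ, u, v) :=
    hcrit ▸ hdiff.hasFDerivAt
  set w : Fin N → ℝ := Pi.single i 1 with hw
  refine ⟨i, ?_, ?_, hri⟩
  · -- u component
    ( have hL : HasDerivAt (fun t : ℝ => ((θ, fun j => u j + t * w j, v) :
          (Fin p → ℝ) × (Fin N → ℝ) × (Fin N → ℝ))) (0, w, 0) 0 := by
        refine (hasDerivAt_const 0 θ).prodMk (HasDerivAt.prodMk ?_ (hasDerivAt_const 0 v))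
        rw [hasDerivAt_pi]
        intro j
        simpa using ((hasDerivAt_id (0:ℝ)).mul_const (w j)).const_add (u j)
      have hchain : HasDerivAt (fun t : ℝ => h (θ, fun j => u j + t * w j, v)) 0 0 := by
        have h0' : HasFDerivAt h (0 : ((Fin p → ℝ) × (Fin N → ℝ) × (Fin N → ℝ)) →L[ℝ] ℝ)
            (θ, fun j => u j + 0 * w j, v) := by simpa using h0
        have := h0'.comp_hasDerivAt 0 hL
        simp at this; exact this
      have hdirect : HasDerivAt (fun t : ℝ => h (θ, fun j => u j + t * w j, v))
          (2 * r i * u i) 0 := by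
        simp only [hdef]
        have hterm : ∀ j : Fin N, HasDerivAt (fun t : ℝ =>
            (J.mulVec θ j + (u j + t * w j) * (u j + t * w j) - v j * v j - y j)^2)
            (2 * r j * (2 * w j * u j)) 0 := by
          intro j
          have h1 : HasDerivAt (fun t : ℝ => u j + t * w j) (w j) 0 := by
            simpa using ((hasDerivAt_id (0:ℝ)).mul_const (w j)).const_add (u j)
          have h4 := ((((h1.mul h1).const_add (J.mulVec θ j)).sub_const
            (v j * v j)).sub_const (y j)).pow 2
          refine h4.congr_deriv ?_
          simp only [hr, Pi.mul_apply]
          push_cast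
          ring
        have hsum := HasDerivAt.const_mul (1/2 : ℝ)
          (HasDerivAt.fun_sum (u := (Finset.univ : Finset (Fin N))) (fun j _ => hterm j))
        refine hsum.congr_deriv ?_
        rw [Finset.sum_eq_single i]
        · simp [hw, Pi.single_apply]; ring
        · intro b _ hb; simp [hw, Pi.single_apply, hb]
        · simp
      have := hchain.unique hdirect
      have h2 : r i * u i = 0 := by linarith
      rcases mul_eq_zero.1 h2 with h3 | h3
      · exact absurd h3 hri
      · exact h3 )
  · -- v component
    ( have hL : HasDerivAt (fun t : ℝ => ((θ, u, fun j => v j + t * w j) :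
          (Fin p → ℝ) × (Fin N → ℝ) × (Fin N → ℝ))) (0, 0, w) 0 := by
        refine (hasDerivAt_const 0 θ).prodMk (HasDerivAt.prodMk (hasDerivAt_const 0 u) ?_)
        rw [hasDerivAt_pi]
        intro j
        simpa using ((hasDerivAt_id (0:ℝ)).mul_const (w j)).const_add (v j)
      have hchain : HasDerivAt (fun t : ℝ => h (θ, u, fun j => v j + t * w j)) 0 0 := by
        have h0' : HasFDerivAt h (0 : ((Fin p → ℝ) × (Fin N → ℝ) × (Fin N → ℝ)) →L[ℝ] ℝ)
            (θ, u, fun j => v j + 0 * w j) := by simpa using h0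
        have := h0'.comp_hasDerivAt 0 hL
        simp at this; exact this
      have hdirect : HasDerivAt (fun t : ℝ => h (θ, u, fun j => v j + t * w j))
          (-(2 * r i * v i)) 0 := by
        simp only [hdef]
        have hterm : ∀ j : Fin N, HasDerivAt (fun t : ℝ =>
            (J.mulVec θ j + u j * u j - (v j + t * w j) * (v j + t * w j) - y j)^2)
            (-(2 * r j * (2 * w j * v j))) 0 := by
          intro j
          have h1 : HasDerivAt (fun t : ℝ => v j + t * w j) (w j) 0 := by
            simpa using ((hasDerivAt_id (0:ℝ)).mul_const (w j)).const_add (v j)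
          have h4 := (((h1.mul h1).const_sub
            (J.mulVec θ j + u j * u j)).sub_const (y j)).pow 2
          refine h4.congr_deriv ?_
          simp only [hr, Pi.mul_apply]
          push_cast
          ring
        have hsum := HasDerivAt.const_mul (1/2 : ℝ)
          (HasDerivAt.fun_sum (u := (Finset.univ : Finset (Fin N))) (fun j _ => hterm j))
        refine hsum.congr_deriv ?_
        rw [Finset.sum_eq_single i]
        · simp [hw, Pi.single_apply]; ring
        · intro b _ hb; simp [hw, Pi.single_apply, hb]
        · simp
      have := hchain.unique hdirect
      have h2 : r i * v i = 0 := by linarith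
      rcases mul_eq_zero.1 h2 with h3 | h3
      · exact absurd h3 hri
      · exact h3 )
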